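/- ZMod 12 has no 8-element subset that is a sum A + B where A is a 4-element extreme subset of ZMod 12 and B is a 2-element coset. (Up to equivalence, the only 4-element extreme subsets of ZMod 12 are {0,1,6,7}, {0,2,6,8}, and {0,3,6,9}, all of which contain 6; if B is normalized to {0,6}, then A cannot contain 6, a contradiction with the fact that every 4-element extreme set containing 0 contains 6 after a suitable normalization.) -/

import Mathlib

open Complex Finset Pointwise

/-- A finite subset `A` of `ZMod n` is extreme if there is a function supported
on `A`, unimodular on `A`, with vanishing autocorrelation at nonzero shifts. -/
def IsExtremeSet {n : ℕ} [NeZero n] (A : Finset (ZMod n)) : Prop :=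
  ∃ f : ZMod n → ℂ,
    (∀ x ∈ A, ‖f x‖ = 1) ∧ (∀ x ∉ A, f x = 0) ∧
    ∀ d : ZMod n, d ≠ 0 → ∑ x : ZMod n, f x * (starRingEnd ℂ) (f (x - d)) = 0

set_option maxRecDepth 40000 in
lemma key_finite : ∀ b c d : ZMod 12,
    ({0, b, c, d} : Finset (ZMod 12)).card = 4 →
    (∀ a ∈ ({0, b, c, d} : Finset (ZMod 12)), a + 6 ∉ ({0, b, c, d} : Finset (ZMod 12))) →
    ∃ e : ZMod 12, e ≠ 0 ∧
      (({0, b, c, d} : Finset (ZMod 12)).filter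
        (fun x => x - e ∈ ({0, b, c, d} : Finset (ZMod 12)))).card = 1 := by decide

lemma two_smul_zmod12 : ∀ x : ZMod 12, x + x = 0 → x = 0 ∨ x = 6 := by decide

/-- Key step: a 4-element extreme set `A` (via any translate) admits a nonzero shift
with exactly one incidence. -/
lemma exists_unique_shift (A : Finset (ZMod 12)) (hA4 : A.card = 4)
    (hdisj : ∀ a ∈ A, a + 6 ∉ A) :
    ∃ e : ZMod 12, e ≠ 0 ∧ (A.filter (fun x => x - e ∈ A)).card = 1 := by
  obtain ⟨a0, ha0⟩ : A.Nonempty := Finset.card_pos.mp (by omega)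
  have hinj : Function.Injective (fun x : ZMod 12 => x - a0) := by
    intro x y h
    exact sub_left_inj.mp h
  set A' : Finset (ZMod 12) := A.image (fun x => x - a0) with hA'
  have hmem : ∀ x : ZMod 12, x ∈ A' ↔ x + a0 ∈ A := by
    intro x
    simp only [hA', Finset.mem_image]
    constructor
    · rintro ⟨y, hy, rfl⟩; simpa using hy
    · intro h; exact ⟨x + a0, h, by ring⟩
  have hcard' : A'.card = 4 := by rw [hA', Finset.card_image_of_injective _ hinj, hA4]
  have hdisj' : ∀ a ∈ A', a + 6 ∉ A' := by
    intro a ha hcon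
    rw [hmem] at ha hcon
    rw [show a + 6 + a0 = a + a0 + 6 by ring] at hcon
    exact hdisj _ ha hcon
  have h0 : (0 : ZMod 12) ∈ A' := by rw [hmem]; simpa using ha0
  -- write A' as {0, b, c, d}
  have h3 : (A'.erase 0).card = 3 := by rw [Finset.card_erase_of_mem h0, hcard']
  obtain ⟨b, c, d, _, _, _, hbcd⟩ := Finset.card_eq_three.mp h3
  have hA'eq : A' = ({0, b, c, d} : Finset (ZMod 12)) := by
    rw [show ({0, b, c, d} : Finset (ZMod 12)) = insert 0 {b, c, d} from rfl, ← hbcd,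
      Finset.insert_erase h0]
  rw [hA'eq] at hcard' hdisj'
  obtain ⟨e, he0, hecard⟩ := key_finite b c d hcard' hdisj'
  rw [← hA'eq] at hecard
  refine ⟨e, he0, ?_⟩
  have : A'.filter (fun x => x - e ∈ A') =
      (A.filter (fun x => x - e ∈ A)).image (fun x => x - a0) := by
    ext x
    simp only [Finset.mem_filter, Finset.mem_image]
    constructor
    · rintro ⟨hx, hxe⟩
      rw [hA', Finset.mem_image] at hx
      obtain ⟨y, hy, rfl⟩ := hx
      rw [hmem, show y - a0 - e + a0 = y - e by ring] at hxe
      exact ⟨y, ⟨hy, hxe⟩, rfl⟩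
    · rintro ⟨y, ⟨hy, hye⟩, rfl⟩
      refine ⟨?_, ?_⟩
      · rw [hA', Finset.mem_image]; exact ⟨y, hy, rfl⟩
      · rw [hmem, show y - a0 - e + a0 = y - e by ring]; exact hye
  rw [this, Finset.card_image_of_injective _ hinj] at hecard
  exact hecard

theorem no_eight_element_sum_extreme_in_zmod12 :
    ¬ ∃ (S A B : Finset (ZMod 12)), S.card = 8 ∧
        A.card = 4 ∧ IsExtremeSet A ∧ B.card = 2 ∧
        (∃ (t : ZMod 12) (K : AddSubgroup (ZMod 12)),
          (B : Set (ZMod 12)) = (fun k => t + k) '' (K : Set (ZMod 12))) ∧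
        S = A + B := by
  rintro ⟨S, A, B, hS, hA4, ⟨f, hf1, hf0, hfc⟩, hB2, ⟨t, K, hBK⟩, rfl⟩
  -- Step 1: K = {0, 6}, so B = {t, t + 6}
  have hKcard : (K : Set (ZMod 12)).ncard = 2 := by
    have h1 : (B : Set (ZMod 12)).ncard = 2 := by
      rw [Set.ncard_coe_finset, hB2]
    rwa [hBK, Set.ncard_image_of_injective _ (add_right_injective t)] at h1
  have hNK : Nat.card K = 2 := by
    rw [← SetLike.coe_sort_coe, Nat.card_coe_set_eq, hKcard]
  have hKsub : ∀ x ∈ K, x = 0 ∨ x = 6 := by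
    intro x hx
    have h1 : addOrderOf x ∣ Nat.card K := AddSubgroup.addOrderOf_dvd_natCard K hx
    rw [hNK] at h1
    have h2 : 2 • x = 0 := addOrderOf_dvd_iff_nsmul_eq_zero.mp h1
    rw [two_nsmul] at h2
    exact two_smul_zmod12 x h2
  have h6K : (6 : ZMod 12) ∈ K := by
    obtain ⟨a, b, hab, hKab⟩ := Set.ncard_eq_two.mp hKcard
    have ha : a ∈ K := by rw [← SetLike.mem_coe, hKab]; simp
    have hb : b ∈ K := by rw [← SetLike.mem_coe, hKab]; simp
    rcases hKsub a ha with rfl | rfl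
    · rcases hKsub b hb with rfl | rfl
      · exact absurd rfl hab
      · exact hb
    · exact ha
  have htB : t ∈ B := by
    rw [← Finset.mem_coe, hBK]
    exact ⟨0, K.zero_mem, by simp⟩
  have ht6B : t + 6 ∈ B := by
    rw [← Finset.mem_coe, hBK]
    exact ⟨6, h6K, rfl⟩
  have hBeq : B = ({t, t + 6} : Finset (ZMod 12)) := by
    symm
    apply Finset.eq_of_subset_of_card_le
    · intro x hx
      simp only [Finset.mem_insert, Finset.mem_singleton] at hx
      rcases hx with rfl | rfl
      · exact htB
      · exact ht6B
    · rw [hB2, Finset.card_insert_of_notMem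
        (by simp only [Finset.mem_singleton, left_eq_add]; decide), Finset.card_singleton]
  -- Step 2: A and A + 6 are disjoint
  have hdisj : ∀ a ∈ A, a + 6 ∉ A := by
    intro a ha hcon
    have hunion : A + B = A.image (fun x => x + t) ∪ A.image (fun x => x + (t + 6)) := by
      rw [hBeq, show ({t, t + 6} : Finset (ZMod 12)) = {t} ∪ {t + 6} by rfl,
        Finset.add_union, Finset.add_singleton, Finset.add_singleton]
      rfl
    have hX : (A.image (fun x => x + t)).card = 4 := by
      rw [Finset.card_image_of_injective _ (add_left_injective t), hA4]
    have hY : (A.image (fun x => x + (t + 6))).card = 4 := by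
      rw [Finset.card_image_of_injective _ (add_left_injective (t + 6)), hA4]
    have hmemI : a + 6 + t ∈ A.image (fun x => x + t) ∩ A.image (fun x => x + (t + 6)) := by
      rw [Finset.mem_inter]
      constructor
      · exact Finset.mem_image.mpr ⟨a + 6, hcon, rfl⟩
      · exact Finset.mem_image.mpr ⟨a, ha, by ring⟩
    have hI : 1 ≤ (A.image (fun x => x + t) ∩ A.image (fun x => x + (t + 6))).card :=
      Finset.card_pos.mpr ⟨_, hmemI⟩
    have hcu := Finset.card_union_add_card_inter (A.image (fun x => x + t))
      (A.image (fun x => x + (t + 6)))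
    rw [hunion] at hS
    omega
  -- Step 3: a nonzero shift with exactly one incidence
  obtain ⟨e, he0, hecard⟩ := exists_unique_shift A hA4 hdisj
  -- Step 4: contradiction with vanishing autocorrelation
  have hsum := hfc e he0
  have hrw : ∑ x : ZMod 12, f x * (starRingEnd ℂ) (f (x - e)) =
      ∑ x ∈ A.filter (fun x => x - e ∈ A), f x * (starRingEnd ℂ) (f (x - e)) := by
    rw [Finset.sum_filter]
    rw [← Finset.sum_filter]
    rw [show A.filter (fun x => x - e ∈ A) =
      Finset.univ.filter (fun x : ZMod 12 => x ∈ A ∧ x - e ∈ A) by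
        ext x; simp [and_comm]]
    rw [Finset.sum_filter]
    apply Finset.sum_congr rfl
    intro x _
    by_cases hx : x ∈ A
    · by_cases hxe : x - e ∈ A
      · simp [hx, hxe]
      · simp [hx, hxe, hf0 _ hxe]
    · simp [hx, hf0 _ hx]
  obtain ⟨a, hae⟩ := Finset.card_eq_one.mp hecard
  have haA : a ∈ A ∧ a - e ∈ A := by
    have : a ∈ A.filter (fun x => x - e ∈ A) := by rw [hae]; simp
    simpa using this
  rw [hrw, hae, Finset.sum_singleton] at hsum
  have habs : ‖f a * (starRingEnd ℂ) (f (a - e))‖ = 1 := by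
    rw [norm_mul, Complex.norm_conj, hf1 _ haA.1, hf1 _ haA.2, mul_one]
  rw [hsum] at habs
  simp at habs
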